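/- The values of problems (P) and (P̃) are equal: val(P) = val(P̃). Moreover, if problem (P) is feasible (there exists (m,π) with π ∈ Δ, m = m^π and J(m,π) < +∞), then both (P) and (P̃) have a nonempty and bounded set of optimal solutions. -/

import Mathlib

noncomputable section
open Finset Filter Topology Bornology
open scoped Classical Pointwise

/-- Fenchel conjugate of a function on a finite coordinate space. -/
def conjFn {d : Type*} [Fintype d] (g : (d → ℝ) → EReal) (y : d → ℝ) : EReal :=
  ⨆ x : d → ℝ, (↑(∑ i, x i * y i) : EReal) - g x

/-- Fenchel conjugate, scalar case. -/
def conjR (g : ℝ → EReal) (y : ℝ) : EReal :=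
  ⨆ x : ℝ, (↑(x * y) : EReal) - g x

/-- Subdifferential (empty where `g = ⊤`). -/
def subdiffFn {d : Type*} [Fintype d] (g : (d → ℝ) → EReal) (x : d → ℝ) : Set (d → ℝ) :=
  {p | g x ≠ ⊤ ∧ ∀ x', g x + (↑(∑ i, p i * (x' i - x i)) : EReal) ≤ g x'}

def subdiffR (g : ℝ → EReal) (x : ℝ) : Set ℝ :=
  {p | g x ≠ ⊤ ∧ ∀ x', g x + (↑(p * (x' - x)) : EReal) ≤ g x'}

def EProper {E : Type*} (g : E → EReal) : Prop := (∃ x, g x ≠ ⊤) ∧ ∀ x, g x ≠ ⊥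

def EConvexOn {E : Type*} [AddCommMonoid E] [SMul ℝ E] (g : E → EReal) : Prop :=
  ∀ x y : E, ∀ a b : ℝ, 0 ≤ a → 0 ≤ b → a + b = 1 →
    g (a • x + b • y) ≤ (a : EReal) * g x + (b : EReal) * g y

def EStrictConvexOn {E : Type*} [AddCommMonoid E] [SMul ℝ E] (g : E → EReal) : Prop :=
  ∀ x y : E, x ≠ y → g x ≠ ⊤ → g y ≠ ⊤ → ∀ a b : ℝ, 0 < a → 0 < b → a + b = 1 →
    g (a • x + b • y) < (a : EReal) * g x + (b : EReal) * g y

/-- Perspective function. -/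
def persp {d : Type*} [Fintype d] (h : (d → ℝ) → EReal) (θ : ℝ) (x : d → ℝ) : EReal :=
  if 0 < θ then (θ : EReal) * h (θ⁻¹ • x)
  else if θ = 0 ∧ x = 0 then 0 else ⊤

/-- The simplex `Δ(S)`. -/
def simplex (n : ℕ) : Set (Fin n → ℝ) :=
  {ρ | (∀ y, ρ y ∈ Set.Icc (0 : ℝ) 1) ∧ ∑ y, ρ y = 1}

abbrev Msp (T n : ℕ) := Fin (T + 1) → Fin n → ℝ
abbrev Wsp (T n : ℕ) := Fin T → Fin n → Fin n → ℝ
abbrev Psp (T : ℕ) := Fin T → ℝ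
abbrev Csp (T n : ℕ) := Msp T n × Wsp T n × Msp T n × Psp T
abbrev Ksp (T n : ℕ) := Msp T n × Msp T n × Psp T
abbrev LSp (T n : ℕ) := Fin T → Fin n → (Fin n → ℝ) → EReal
abbrev FSp (T n : ℕ) := Fin (T + 1) → (Fin n → ℝ) → EReal
abbrev PhiSp (T : ℕ) := Fin T → ℝ → EReal
abbrev ASp (T n : ℕ) := Fin T → Fin n → Fin n → ℝ

variable {T n : ℕ}

def opA (α : ASp T n) (w : Wsp T n) (t : Fin T) : ℝ := ∑ x, ∑ y, w t x y * α t x y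

def opS (w : Wsp T n) (s : Fin (T + 1)) (x : Fin n) : ℝ :=
  if h : (s : ℕ) = 0 then 0
  else ∑ y, w ⟨(s : ℕ) - 1, by have := s.isLt; omega⟩ y x

def mbar0 (m0 : Fin n → ℝ) (s : Fin (T + 1)) (x : Fin n) : ℝ := if s = 0 then m0 x else 0

def Qcpl (α : ASp T n) (m : Msp T n) (π : Wsp T n) (t : Fin T) : ℝ :=
  ∑ x, ∑ y, m t.castSucc x * π t x y * α t x y

def IsKol (m0 : Fin n → ℝ) (π : Wsp T n) (m : Msp T n) : Prop :=
  (∀ x, m 0 x = m0 x) ∧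
    ∀ (t : Fin T) (x : Fin n), m t.succ x = ∑ y, m t.castSucc y * π t y x

def InDelta (π : Wsp T n) : Prop := ∀ t x, π t x ∈ simplex n

def ConvAssumption (ℓ : LSp T n) (F : FSp T n) (φ : PhiSp T) : Prop :=
  (∀ t x, EProper (ℓ t x) ∧ EConvexOn (ℓ t x) ∧ LowerSemicontinuous (ℓ t x) ∧
    ∀ ρ, ℓ t x ρ ≠ ⊤ → ρ ∈ simplex n) ∧
  (∀ s, EProper (F s) ∧ EConvexOn (F s) ∧ LowerSemicontinuous (F s)) ∧
  (∀ t, EProper (φ t) ∧ EConvexOn (φ t) ∧ LowerSemicontinuous (φ t))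

def Jpot (ℓ : LSp T n) (F : FSp T n) (φ : PhiSp T) (α : ASp T n)
    (m : Msp T n) (π : Wsp T n) : EReal :=
  (∑ t, ∑ x, (↑(m t.castSucc x) : EReal) * ℓ t x (π t x)) +
    (∑ t, φ t (Qcpl α m π t)) + ∑ s, F s (m s)

def Jtil (ℓ : LSp T n) (F : FSp T n) (φ : PhiSp T) (α : ASp T n)
    (m : Msp T n) (w : Wsp T n) : EReal :=
  (∑ t, ∑ x, persp (ℓ t x) (m t.castSucc x) (w t x)) +
    (∑ t, φ t (opA α w t)) + ∑ s, F s (m s)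

def FeasP (m0 : Fin n → ℝ) (p : Msp T n × Wsp T n) : Prop := InDelta p.2 ∧ IsKol m0 p.2 p.1

def FeasPt (m0 : Fin n → ℝ) (p : Msp T n × Wsp T n) : Prop :=
  ∀ s x, opS p.2 s x - p.1 s x + mbar0 m0 s x = 0

def valP (ℓ : LSp T n) (F : FSp T n) (φ : PhiSp T) (α : ASp T n) (m0 : Fin n → ℝ) : EReal :=
  ⨅ p ∈ {p : Msp T n × Wsp T n | FeasP m0 p}, Jpot ℓ F φ α p.1 p.2

def valPt (ℓ : LSp T n) (F : FSp T n) (φ : PhiSp T) (α : ASp T n) (m0 : Fin n → ℝ) : EReal :=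
  ⨅ p ∈ {p : Msp T n × Wsp T n | FeasPt m0 p}, Jtil ℓ F φ α p.1 p.2

def IsSolP (ℓ : LSp T n) (F : FSp T n) (φ : PhiSp T) (α : ASp T n) (m0 : Fin n → ℝ)
    (p : Msp T n × Wsp T n) : Prop :=
  FeasP m0 p ∧ ∀ q, FeasP m0 q → Jpot ℓ F φ α p.1 p.2 ≤ Jpot ℓ F φ α q.1 q.2

def IsSolPt (ℓ : LSp T n) (F : FSp T n) (φ : PhiSp T) (α : ASp T n) (m0 : Fin n → ℝ)
    (p : Msp T n × Wsp T n) : Prop :=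
  FeasPt m0 p ∧ ∀ q, FeasPt m0 q → Jtil ℓ F φ α p.1 p.2 ≤ Jtil ℓ F φ α q.1 q.2

def dpCost (ℓ : LSp T n) (α : ASp T n) (u : Msp T n) (P : Psp T)
    (t : Fin T) (x : Fin n) : EReal :=
  conjFn (ℓ t x) (fun y => -(α t x y * P t + u t.succ y))

def FeasD (ℓ : LSp T n) (α : ASp T n) (k : Ksp T n) : Prop :=
  (∀ t x, (↑(k.1 t.castSucc x) : EReal) + dpCost ℓ α k.1 k.2.2 t x ≤ ↑(k.2.1 t.castSucc x)) ∧
  ∀ x, k.1 (Fin.last T) x = k.2.1 (Fin.last T) x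

def Dobj (F : FSp T n) (φ : PhiSp T) (m0 : Fin n → ℝ) (k : Ksp T n) : EReal :=
  (↑(∑ x, m0 x * k.1 0 x) : EReal) - (∑ t, conjR (φ t) (k.2.2 t)) -
    ∑ s, conjFn (F s) (k.2.1 s)

def valD (ℓ : LSp T n) (F : FSp T n) (φ : PhiSp T) (α : ASp T n) (m0 : Fin n → ℝ) : EReal :=
  ⨆ k ∈ {k : Ksp T n | FeasD ℓ α k}, Dobj F φ m0 k

def IsSolD (ℓ : LSp T n) (F : FSp T n) (φ : PhiSp T) (α : ASp T n) (m0 : Fin n → ℝ)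
    (k : Ksp T n) : Prop :=
  FeasD ℓ α k ∧ ∀ k', FeasD ℓ α k' → Dobj F φ m0 k' ≤ Dobj F φ m0 k

/-- `IsDP ℓ α γ P u` : `u = U[γ,P]`, i.e. `u` solves the dynamic programming equation. -/
def IsDP (ℓ : LSp T n) (α : ASp T n) (γ : Msp T n) (P : Psp T) (u : Msp T n) : Prop :=
  (∀ (t : Fin T) (x : Fin n),
    (↑(u t.castSucc x) : EReal) + dpCost ℓ α u P t x = ↑(γ t.castSucc x)) ∧
  ∀ x, u (Fin.last T) x = γ (Fin.last T) x

def valDt (ℓ : LSp T n) (F : FSp T n) (φ : PhiSp T) (α : ASp T n) (m0 : Fin n → ℝ) : EReal :=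
  ⨆ k ∈ {k : Ksp T n | IsDP ℓ α k.2.1 k.2.2 k.1}, Dobj F φ m0 k

def IsSolDt (ℓ : LSp T n) (F : FSp T n) (φ : PhiSp T) (α : ASp T n) (m0 : Fin n → ℝ)
    (γ : Msp T n) (P : Psp T) (u : Msp T n) : Prop :=
  IsDP ℓ α γ P u ∧
    ∀ γ' P' u', IsDP ℓ α γ' P' u' → Dobj F φ m0 (u', γ', P') ≤ Dobj F φ m0 (u, γ, P)

def IsKolPert (m0 : Fin n → ℝ) (ε1 : Msp T n) (π : Wsp T n) (m1 : Msp T n) : Prop :=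
  (∀ x, m1 0 x = mbar0 m0 (0 : Fin (T + 1)) x + ε1 0 x) ∧
  ∀ (t : Fin T) (x : Fin n), m1 t.succ x = (∑ y, m1 t.castSucc y * π t y x) - ε1 t.succ x

def qnorm (ε1 ε2 : Msp T n) (ε3 : Psp T) : ℝ :=
  Real.sqrt ((∑ s, ∑ x, ε1 s x ^ 2) + (∑ s, ∑ x, ε2 s x ^ 2) + ∑ t, ε3 t ^ 2)

def Qualif (ℓ : LSp T n) (F : FSp T n) (φ : PhiSp T) (α : ASp T n) (m0 : Fin n → ℝ) : Prop :=
  ∃ α0 : ℝ, 0 < α0 ∧ ∀ (ε1 ε2 : Msp T n) (ε3 : Psp T), qnorm ε1 ε2 ε3 ≤ α0 →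
    ∃ π : Wsp T n, (∀ t x, ℓ t x (π t x) ≠ ⊤) ∧
      ∃ m1 : Msp T n, IsKolPert m0 ε1 π m1 ∧ (∀ s x, 0 ≤ m1 s x) ∧
        (∀ s, F s (fun x => m1 s x + ε2 s x) ≠ ⊤) ∧
        ∀ t, φ t (Qcpl α m1 π t + ε3 t) ≠ ⊤

def Fobj (ℓ : LSp T n) (F : FSp T n) (φ : PhiSp T) (c : Csp T n) : EReal :=
  (∑ t, ∑ x, persp (ℓ t x) (c.1 t.castSucc x) (c.2.1 t x)) +
    (∑ t, φ t (c.2.2.2 t)) + ∑ s, F s (c.2.2.1 s)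

def Gobj (m0 : Fin n → ℝ) (k : Ksp T n) : EReal :=
  if (∀ s x, k.1 s x = -(mbar0 m0 s x)) ∧ k.2.1 = 0 ∧ k.2.2 = 0 then 0 else ⊤

def Aop (α : ASp T n) (c : Csp T n) : Ksp T n :=
  (fun s x => opS c.2.1 s x - c.1 s x,
   fun s x => c.1 s x - c.2.2.1 s x,
   fun t => opA α c.2.1 t - c.2.2.2 t)

def AstarOp (α : ASp T n) (k : Ksp T n) : Csp T n :=
  (fun s x => k.2.1 s x - k.1 s x,
   fun t x y => α t x y * k.2.2 t + k.1 t.succ y,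
   fun s x => -k.2.1 s x,
   fun t => -k.2.2 t)

def cpair (c c' : Csp T n) : ℝ :=
  (∑ s, ∑ x, c.1 s x * c'.1 s x) + (∑ t, ∑ x, ∑ y, c.2.1 t x y * c'.2.1 t x y) +
    (∑ s, ∑ x, c.2.2.1 s x * c'.2.2.1 s x) + ∑ t, c.2.2.2 t * c'.2.2.2 t

def kpair (k k' : Ksp T n) : ℝ :=
  (∑ s, ∑ x, k.1 s x * k'.1 s x) + (∑ s, ∑ x, k.2.1 s x * k'.2.1 s x) +
    ∑ t, k.2.2 t * k'.2.2 t

def FobjStar (ℓ : LSp T n) (F : FSp T n) (φ : PhiSp T) (c' : Csp T n) : EReal :=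
  ⨆ c : Csp T n, (↑(cpair c c') : EReal) - Fobj ℓ F φ c

def GobjStar (m0 : Fin n → ℝ) (k : Ksp T n) : EReal := ↑(-(∑ x, m0 x * k.1 0 x))

def PfrakObj (ℓ : LSp T n) (F : FSp T n) (φ : PhiSp T) (α : ASp T n) (m0 : Fin n → ℝ)
    (c : Csp T n) : EReal := Fobj ℓ F φ c + Gobj m0 (Aop α c)

def DfrakObj (ℓ : LSp T n) (F : FSp T n) (φ : PhiSp T) (α : ASp T n) (m0 : Fin n → ℝ)
    (k : Ksp T n) : EReal := FobjStar ℓ F φ (-AstarOp α k) + GobjStar m0 k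

def IsSolPfrak (ℓ : LSp T n) (F : FSp T n) (φ : PhiSp T) (α : ASp T n) (m0 : Fin n → ℝ)
    (c : Csp T n) : Prop := ∀ c', PfrakObj ℓ F φ α m0 c ≤ PfrakObj ℓ F φ α m0 c'

def IsSolDfrak (ℓ : LSp T n) (F : FSp T n) (φ : PhiSp T) (α : ASp T n) (m0 : Fin n → ℝ)
    (k : Ksp T n) : Prop := ∀ k', DfrakObj ℓ F φ α m0 k ≤ DfrakObj ℓ F φ α m0 k'

def MFGi (ℓ : LSp T n) (α : ASp T n) (γ : Msp T n) (P : Psp T) (u : Msp T n) : Prop :=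
  (∀ (t : Fin T) (x : Fin n), (↑(u t.castSucc x) : EReal) =
      ⨅ ρ ∈ simplex n,
        ℓ t x ρ + ↑(γ t.castSucc x) + ↑(∑ y, ρ y * (α t x y * P t + u t.succ y))) ∧
  ∀ x, u (Fin.last T) x = γ (Fin.last T) x

def MFGii (ℓ : LSp T n) (α : ASp T n) (π : Wsp T n) (γ : Msp T n) (P : Psp T)
    (u : Msp T n) : Prop :=
  ∀ (t : Fin T) (x : Fin n),
    ℓ t x (π t x) + ↑(γ t.castSucc x) + ↑(∑ y, π t x y * (α t x y * P t + u t.succ y)) =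
      (↑(u t.castSucc x) : EReal)

def IsMFGSol (ℓ : LSp T n) (F : FSp T n) (φ : PhiSp T) (α : ASp T n) (m0 : Fin n → ℝ)
    (m : Msp T n) (π : Wsp T n) (u : Msp T n) (γ : Msp T n) (P : Psp T) : Prop :=
  InDelta π ∧ MFGi ℓ α γ P u ∧ MFGii ℓ α π γ P u ∧ IsKol m0 π m ∧
    (∀ s, γ s ∈ subdiffFn (F s) (m s)) ∧ ∀ t, P t ∈ subdiffR (φ t) (Qcpl α m π t)


section AuxEReal

lemma ESum_ne_bot {ι : Type*} {s : Finset ι} {f : ι → EReal} (h : ∀ i ∈ s, f i ≠ ⊥) :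
    ∑ i ∈ s, f i ≠ ⊥ := by
  classical
  induction s using Finset.induction with
  | empty => simp
  | @insert a s ha ih =>
    rw [Finset.sum_insert ha]
    simp only [ne_eq, EReal.add_eq_bot_iff]
    push_neg
    exact ⟨h a (Finset.mem_insert_self a s), ih fun i hi => h i (Finset.mem_insert_of_mem hi)⟩

lemma ESum_mem_ne_top {ι : Type*} {s : Finset ι} {f : ι → EReal} (hb : ∀ i ∈ s, f i ≠ ⊥)
    (h : ∑ i ∈ s, f i ≠ ⊤) : ∀ i ∈ s, f i ≠ ⊤ := by
  classical
  intro i hi hitop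
  apply h
  rw [← Finset.add_sum_erase _ _ hi, hitop, EReal.top_add_of_ne_bot]
  exact ESum_ne_bot fun j hj => hb j (Finset.mem_of_mem_erase hj)

lemma EAdd_ne_top_left {a b : EReal} (hb : b ≠ ⊥) (h : a + b ≠ ⊤) : a ≠ ⊤ :=
  fun ha => h (ha ▸ EReal.top_add_of_ne_bot hb)

lemma EAdd_ne_top_right {a b : EReal} (ha : a ≠ ⊥) (h : a + b ≠ ⊤) : b ≠ ⊤ :=
  fun hb => h (hb ▸ EReal.add_top_of_ne_bot ha)

lemma Emul_coe_ne_bot {a : ℝ} (ha : 0 ≤ a) {b : EReal} (hb : b ≠ ⊥) : (a : EReal) * b ≠ ⊥ := by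
  rcases ha.lt_or_eq with h | h
  · induction b with
    | bot => exact absurd rfl hb
    | coe r => rw [← EReal.coe_mul]; exact EReal.coe_ne_bot _
    | top => rw [EReal.coe_mul_top_of_pos h]; simp
  · rw [← h, EReal.coe_zero, zero_mul]; exact fun h0 => by simp at h0

end AuxEReal

section AuxPersp

variable {n : ℕ}

lemma simplex_isClosed : IsClosed (simplex n) := by
  have h1 : IsClosed {ρ : Fin n → ℝ | ∀ y, ρ y ∈ Set.Icc (0:ℝ) 1} := by
    have : {ρ : Fin n → ℝ | ∀ y, ρ y ∈ Set.Icc (0:ℝ) 1} =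
        ⋂ y, (fun ρ : Fin n → ℝ => ρ y) ⁻¹' Set.Icc (0:ℝ) 1 := by
      ext ρ; simp
    rw [this]
    exact isClosed_iInter fun y => isClosed_Icc.preimage (continuous_apply y)
  have h2 : IsClosed {ρ : Fin n → ℝ | ∑ y, ρ y = 1} :=
    isClosed_eq (continuous_finset_sum _ fun i _ => continuous_apply i) continuous_const
  exact h1.inter h2

lemma simplex_isCompact : IsCompact (simplex n) := by
  refine (isCompact_closedBall (0 : Fin n → ℝ) 1).of_isClosed_subset simplex_isClosed ?_
  intro ρ hρ
  rw [Metric.mem_closedBall, dist_zero_right]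
  rw [pi_norm_le_iff_of_nonneg zero_le_one]
  intro i
  rw [Real.norm_eq_abs, abs_le]
  exact ⟨by linarith [(hρ.1 i).1], (hρ.1 i).2⟩

lemma lsc_lower_bound {g : (Fin n → ℝ) → EReal} (hlsc : LowerSemicontinuous g)
    (hbot : ∀ ρ, g ρ ≠ ⊥) (hdom : ∀ ρ, g ρ ≠ ⊤ → ρ ∈ simplex n) :
    ∃ M : ℝ, 0 < M ∧ ∀ ρ, ((-M : ℝ) : EReal) ≤ g ρ := by
  by_contra hcon
  push_neg at hcon
  have hZ : ∀ k : ℕ, ∃ ρ, ρ ∈ simplex n ∧ g ρ ≤ ((-(k+1) : ℝ) : EReal) := by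
    intro k
    obtain ⟨ρ, hρ⟩ := hcon (k+1) (by positivity)
    refine ⟨ρ, hdom ρ (fun ht => by simp [ht] at hρ), ?_⟩
    push_cast at hρ ⊢
    exact hρ.le
  set Z : ℕ → Set (Fin n → ℝ) := fun k => simplex n ∩ {ρ | g ρ ≤ ((-(k+1) : ℝ) : EReal)} with hZdef
  have hsub : ∀ k, {ρ : Fin n → ℝ | g ρ ≤ ((-(k+1) : ℝ) : EReal)} =
      (g ⁻¹' Set.Ioi ((-(k+1) : ℝ) : EReal))ᶜ := by
    intro k; ext ρ; simp [not_lt]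
  have hclosed : ∀ k, IsClosed (Z k) := by
    intro k
    refine simplex_isClosed.inter ?_
    rw [hsub k]
    exact (hlsc.isOpen_preimage _).isClosed_compl
  have hcomp : ∀ k, IsCompact (Z k) :=
    fun k => simplex_isCompact.of_isClosed_subset (hclosed k) Set.inter_subset_left
  have hne : ∀ k, (Z k).Nonempty := fun k => by
    obtain ⟨ρ, h1, h2⟩ := hZ k; exact ⟨ρ, h1, h2⟩
  have hanti : ∀ {j k : ℕ}, j ≤ k → Z k ⊆ Z j := by
    intro j k hjk ρ hρ
    obtain ⟨h1, h2⟩ := hρ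
    refine ⟨h1, ?_⟩
    simp only [Set.mem_setOf_eq] at h2 ⊢
    refine h2.trans ?_
    rw [EReal.coe_le_coe_iff]
    have hjk' : (j : ℝ) ≤ k := by exact_mod_cast hjk
    linarith
  have hdir : Directed (· ⊇ ·) Z := fun j k =>
    ⟨max j k, hanti (le_max_left j k), hanti (le_max_right j k)⟩
  obtain ⟨ρ, hρ⟩ := IsCompact.nonempty_iInter_of_directed_nonempty_isCompact_isClosed
    Z hdir hne hcomp hclosed
  simp only [Set.mem_iInter] at hρ
  have hall : ∀ k : ℕ, g ρ ≤ ((-(k+1) : ℝ) : EReal) := fun k => (hρ k).2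
  have hb : (⊥ : EReal) < g ρ := bot_lt_iff_ne_bot.2 (hbot ρ)
  obtain ⟨r, _, hr2⟩ := EReal.exists_between_coe_real hb
  obtain ⟨k, hk⟩ := exists_nat_gt (-r)
  have h1 := hall k
  have h2 : ((-((k:ℝ)+1) : ℝ) : EReal) < (r : EReal) := by
    rw [EReal.coe_lt_coe_iff]; linarith
  exact absurd (h1.trans_lt (h2.trans hr2)) (lt_irrefl _)

variable {g : (Fin n → ℝ) → EReal}

lemma persp_pos_eq {θ : ℝ} (hθ : 0 < θ) (x : Fin n → ℝ) :
    persp g θ x = (θ : EReal) * g (θ⁻¹ • x) := if_pos hθ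

lemma persp_zero_zero : persp g 0 (0 : Fin n → ℝ) = 0 := by
  unfold persp
  rw [if_neg (lt_irrefl 0), if_pos ⟨rfl, rfl⟩]

lemma persp_top_of_neg {θ : ℝ} (hθ : θ < 0) (x : Fin n → ℝ) : persp g θ x = ⊤ := by
  unfold persp
  rw [if_neg (not_lt.2 hθ.le), if_neg (fun h => absurd h.1 hθ.ne)]

lemma persp_top_of_zero_ne {x : Fin n → ℝ} (hx : x ≠ 0) : persp g 0 x = ⊤ := by
  unfold persp
  rw [if_neg (lt_irrefl 0), if_neg (fun h => hx h.2)]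

lemma persp_smul_pos {θ : ℝ} (hθ : 0 < θ) (ρ : Fin n → ℝ) :
    persp g θ (θ • ρ) = (θ : EReal) * g ρ := by
  rw [persp_pos_eq hθ, smul_smul, inv_mul_cancel₀ hθ.ne', one_smul]

lemma persp_ne_bot (hbot : ∀ ρ, g ρ ≠ ⊥) (θ : ℝ) (x : Fin n → ℝ) : persp g θ x ≠ ⊥ := by
  unfold persp
  split_ifs with h1 h2
  · exact Emul_coe_ne_bot h1.le (hbot _)
  · simp
  · simp

lemma persp_struct (hdom : ∀ ρ, g ρ ≠ ⊤ → ρ ∈ simplex n) {θ : ℝ} {x : Fin n → ℝ}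
    (h : persp g θ x ≠ ⊤) :
    (0 < θ ∧ (∀ i, 0 ≤ x i ∧ x i ≤ θ) ∧ ∑ i, x i = θ) ∨ (θ = 0 ∧ x = 0) := by
  unfold persp at h
  split_ifs at h with h1 h2
  · left
    have hg : g (θ⁻¹ • x) ≠ ⊤ := by
      intro ht
      rw [ht, EReal.coe_mul_top_of_pos h1] at h
      exact h rfl
    obtain ⟨hmem, hsum⟩ := hdom _ hg
    refine ⟨h1, fun i => ?_, ?_⟩
    · have := hmem i
      simp only [Pi.smul_apply, smul_eq_mul, Set.mem_Icc] at this
      have hx : x i = θ * (θ⁻¹ * x i) := by field_simp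
      constructor
      · rw [hx]; exact mul_nonneg h1.le this.1
      · rw [hx]
        calc θ * (θ⁻¹ * x i) ≤ θ * 1 := mul_le_mul_of_nonneg_left this.2 h1.le
        _ = θ := mul_one θ
    · have : ∑ i, θ⁻¹ * x i = 1 := by
        simpa [Pi.smul_apply, smul_eq_mul] using hsum
      rw [← Finset.mul_sum] at this
      field_simp at this
      linarith
  · exact Or.inr h2
  · exact absurd rfl h

end AuxPersp

section AuxLsc

variable {n : ℕ} {g : (Fin n → ℝ) → EReal}

lemma persp_lsc (hlsc : LowerSemicontinuous g) (hbot : ∀ ρ, g ρ ≠ ⊥)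
    (hdom : ∀ ρ, g ρ ≠ ⊤ → ρ ∈ simplex n) :
    LowerSemicontinuous fun p : ℝ × (Fin n → ℝ) => persp g p.1 p.2 := by
  obtain ⟨M, hM, hMg⟩ := lsc_lower_bound hlsc hbot hdom
  rintro ⟨θ, x⟩ y hy
  have hy' : y < persp g θ x := hy
  rcases lt_trichotomy θ 0 with hneg | hzero | hpos
  · -- θ < 0
    have hopen : IsOpen {q : ℝ × (Fin n → ℝ) | q.1 < 0} := isOpen_lt continuous_fst continuous_const
    have hmem : (θ, x) ∈ {q : ℝ × (Fin n → ℝ) | q.1 < 0} := hneg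
    filter_upwards [hopen.mem_nhds hmem] with q hq
    rw [persp_top_of_neg hq]
    exact lt_of_lt_of_le hy le_top
  · -- θ = 0
    subst hzero
    by_cases hx : x = 0
    · -- value 0
      subst hx
      rw [persp_zero_zero] at hy'
      obtain ⟨r, hyr, hr0⟩ := EReal.exists_between_coe_real hy'
      rw [← EReal.coe_zero, EReal.coe_lt_coe_iff] at hr0
      set δ : ℝ := -r / M with hδdef
      have hδ : 0 < δ := div_pos (by linarith) hM
      have hopen : IsOpen {q : ℝ × (Fin n → ℝ) | q.1 < δ} :=
        isOpen_lt continuous_fst continuous_const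
      have hmem : ((0:ℝ), (0 : Fin n → ℝ)) ∈ {q : ℝ × (Fin n → ℝ) | q.1 < δ} := hδ
      filter_upwards [hopen.mem_nhds hmem] with q hq
      by_cases htop : persp g q.1 q.2 = ⊤
      · rw [htop]; exact lt_of_lt_of_le hy le_top
      rcases persp_struct hdom htop with ⟨h1, _, _⟩ | ⟨h1, h2⟩
      · rw [persp_pos_eq h1]
        have step1 : ((q.1 * (-M) : ℝ) : EReal) ≤ (q.1 : EReal) * g (q.1⁻¹ • q.2) := by
          rw [EReal.coe_mul]
          exact mul_le_mul_of_nonneg_left (hMg _) (by exact_mod_cast h1.le)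
        refine lt_of_lt_of_le (lt_of_lt_of_le hyr ?_) step1
        rw [EReal.coe_le_coe_iff]
        have : q.1 * M < -r := by
          calc q.1 * M < δ * M := by exact mul_lt_mul_of_pos_right hq hM
          _ = -r := by rw [hδdef]; exact div_mul_cancel₀ _ hM.ne'
        linarith
      · rw [h1, h2, persp_zero_zero]
        exact lt_of_lt_of_le hyr (by exact_mod_cast hr0.le)
    · -- x ≠ 0, value ⊤
      obtain ⟨i, hi⟩ := Function.ne_iff.1 hx
      set ε : ℝ := |x i| / 2 with hεdef
      have hε : 0 < ε := div_pos (abs_pos.2 hi) two_pos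
      have hopenA : IsOpen {q : ℝ × (Fin n → ℝ) | q.1 < ε} :=
        isOpen_lt continuous_fst continuous_const
      have hopenB : IsOpen {q : ℝ × (Fin n → ℝ) | |q.2 i - x i| < ε} :=
        isOpen_lt ((((continuous_apply i).comp continuous_snd).sub continuous_const).abs)
          continuous_const
      have hmemA : ((0:ℝ), x) ∈ {q : ℝ × (Fin n → ℝ) | q.1 < ε} := hε
      have hmemB : ((0:ℝ), x) ∈ {q : ℝ × (Fin n → ℝ) | |q.2 i - x i| < ε} := by
        simp only [Set.mem_setOf_eq, sub_self, abs_zero]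
        exact hε
      filter_upwards [hopenA.mem_nhds hmemA, hopenB.mem_nhds hmemB] with q hqA hqB
      have hq : q.1 < ε ∧ |q.2 i - x i| < ε := ⟨hqA, hqB⟩
      have htop : persp g q.1 q.2 = ⊤ := by
        by_contra htop
        rcases persp_struct hdom htop with ⟨h1, h2, _⟩ | ⟨h1, h2⟩
        · have hb := h2 i
          have h3 : |q.2 i| < ε := by
            rw [abs_of_nonneg hb.1]
            exact lt_of_le_of_lt hb.2 hq.1
          have h4 : |x i| < 2 * ε := by
            calc |x i| ≤ |x i - q.2 i| + |q.2 i| := by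
                  have := abs_sub_abs_le_abs_sub (x i) (q.2 i)
                  have h5 := abs_sub_comm (q.2 i) (x i)
                  nlinarith [abs_nonneg (q.2 i), abs_sub_abs_le_abs_sub (x i) (q.2 i)]
            _ < ε + ε := by
                  rw [abs_sub_comm]
                  exact add_lt_add hq.2 h3
            _ = 2 * ε := by ring
          rw [hεdef] at h4
          have : |x i| > 0 := abs_pos.2 hi
          linarith
        · rw [h2] at hq
          simp only [Pi.zero_apply, zero_sub, abs_neg] at hq
          rw [hεdef] at hq
          have : |x i| > 0 := abs_pos.2 hi
          linarith [hq.2]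
      rw [htop]
      exact lt_of_lt_of_le hy le_top
  · -- 0 < θ
    rw [persp_pos_eq hpos] at hy'
    obtain ⟨r, hyr, hr⟩ := EReal.exists_between_coe_real hy'
    have hrd : ((r / θ : ℝ) : EReal) < g (θ⁻¹ • x) := by
      by_contra H
      push_neg at H
      have : (θ : EReal) * g (θ⁻¹ • x) ≤ ((θ * (r / θ) : ℝ) : EReal) := by
        rw [EReal.coe_mul]
        exact mul_le_mul_of_nonneg_left H (by exact_mod_cast hpos.le)
      rw [mul_div_cancel₀ r hpos.ne'] at this
      exact absurd (lt_of_lt_of_le hr this) (lt_irrefl _)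
    obtain ⟨s, hs1, hs2⟩ := EReal.exists_between_coe_real hrd
    rw [EReal.coe_lt_coe_iff] at hs1
    have hrs : r < θ * s := by
      rw [div_lt_iff₀ hpos] at hs1
      linarith [hs1]
    -- eventually sets
    have hopen1 : IsOpen {q : ℝ × (Fin n → ℝ) | 0 < q.1 ∧ r < q.1 * s} := by
      refine (isOpen_lt continuous_const continuous_fst).inter
        (isOpen_lt continuous_const (continuous_fst.mul continuous_const))
    have hmem1 : (θ, x) ∈ {q : ℝ × (Fin n → ℝ) | 0 < q.1 ∧ r < q.1 * s} := ⟨hpos, hrs⟩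
    have hcontAt : ContinuousAt (fun q : ℝ × (Fin n → ℝ) => q.1⁻¹ • q.2) (θ, x) :=
      (continuous_fst.continuousAt.inv₀ hpos.ne').smul continuous_snd.continuousAt
    have hev2 : ∀ᶠ q : ℝ × (Fin n → ℝ) in 𝓝 (θ, x), (s : EReal) < g (q.1⁻¹ • q.2) :=
      hcontAt.eventually (hlsc _ s hs2)
    filter_upwards [hopen1.mem_nhds hmem1, hev2] with q hq1 hq2
    rw [persp_pos_eq hq1.1]
    have step : ((q.1 * s : ℝ) : EReal) ≤ (q.1 : EReal) * g (q.1⁻¹ • q.2) := by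
      rw [EReal.coe_mul]
      exact mul_le_mul_of_nonneg_left hq2.le (by exact_mod_cast hq1.1.le)
    refine lt_of_lt_of_le (lt_of_lt_of_le hyr ?_) step
    rw [EReal.coe_le_coe_iff]
    exact hq1.2.le

end AuxLsc

section AuxMin

lemma lsc_add_ne_bot {X : Type*} [TopologicalSpace X] {f g : X → EReal}
    (hf : LowerSemicontinuous f) (hg : LowerSemicontinuous g)
    (hf' : ∀ x, f x ≠ ⊥) (hg' : ∀ x, g x ≠ ⊥) :
    LowerSemicontinuous fun x => f x + g x :=
  hf.add' hg fun x => EReal.continuousAt_add (Or.inr (hg' x)) (Or.inl (hf' x))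

lemma lsc_sum {X ι : Type*} [TopologicalSpace X] (s : Finset ι) (f : ι → X → EReal)
    (h : ∀ i ∈ s, LowerSemicontinuous (f i)) (h' : ∀ i ∈ s, ∀ x, f i x ≠ ⊥) :
    LowerSemicontinuous (fun x => ∑ i ∈ s, f i x) := by
  classical
  induction s using Finset.induction with
  | empty => simpa using lowerSemicontinuous_const
  | @insert a s ha ih =>
    have : (fun x => ∑ i ∈ insert a s, f i x) = fun x => f a x + ∑ i ∈ s, f i x := by
      funext x; rw [Finset.sum_insert ha]
    rw [this]
    refine lsc_add_ne_bot (h a (Finset.mem_insert_self a s))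
      (ih (fun i hi => h i (Finset.mem_insert_of_mem hi))
         (fun i hi => h' i (Finset.mem_insert_of_mem hi)))
      (h' a (Finset.mem_insert_self a s)) ?_
    intro x
    exact ESum_ne_bot fun i hi => h' i (Finset.mem_insert_of_mem hi) x

lemma exists_min_lsc {X : Type*} [TopologicalSpace X] {K : Set X} (hK : IsCompact K)
    (hKc : IsClosed K) (hne : K.Nonempty) {f : X → EReal} (hf : LowerSemicontinuous f) :
    ∃ x ∈ K, ∀ y ∈ K, f x ≤ f y := by
  set c := ⨅ y ∈ K, f y with hc
  by_cases htop : c = ⊤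
  · obtain ⟨x, hx⟩ := hne
    refine ⟨x, hx, fun y hy => ?_⟩
    have h1 : c ≤ f y := iInf₂_le y hy
    rw [htop] at h1
    exact le_top.trans h1
  · have hlt : c < ⊤ := lt_top_iff_ne_top.2 htop
    have hι : Nonempty {b : EReal // c < b} := ⟨⟨⊤, hlt⟩⟩
    set Z : {b : EReal // c < b} → Set X := fun b => K ∩ {x | f x ≤ b.1} with hZ
    have hsub : ∀ b : {b : EReal // c < b}, {x | f x ≤ b.1} = (f ⁻¹' Set.Ioi b.1)ᶜ := by
      intro b; ext x; simp [not_lt]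
    have hZclosed : ∀ b, IsClosed (Z b) := by
      intro b
      refine hKc.inter ?_
      rw [hsub b]
      exact (hf.isOpen_preimage _).isClosed_compl
    have hZcomp : ∀ b, IsCompact (Z b) :=
      fun b => hK.of_isClosed_subset (hZclosed b) Set.inter_subset_left
    have hZne : ∀ b, (Z b).Nonempty := by
      rintro ⟨b, hb⟩
      rw [hc] at hb
      have : ∃ y, (⨅ _ : y ∈ K, f y) < b := iInf_lt_iff.1 hb
      obtain ⟨y, hy⟩ := this
      have : ∃ _ : y ∈ K, f y < b := iInf_lt_iff.1 hy
      obtain ⟨hyK, hyb⟩ := this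
      exact ⟨y, hyK, hyb.le⟩
    have hdir : Directed (· ⊇ ·) Z := by
      rintro ⟨a, ha⟩ ⟨b, hb⟩
      refine ⟨⟨min a b, lt_min ha hb⟩, ?_, ?_⟩
      · exact Set.inter_subset_inter_right _ fun x hx => le_trans hx (min_le_left a b)
      · exact Set.inter_subset_inter_right _ fun x hx => le_trans hx (min_le_right a b)
    obtain ⟨x, hx⟩ := IsCompact.nonempty_iInter_of_directed_nonempty_isCompact_isClosed
      Z hdir hZne hZcomp hZclosed
    simp only [Set.mem_iInter] at hx
    have hxK : x ∈ K := (hx ⟨⊤, hlt⟩).1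
    refine ⟨x, hxK, fun y hy => ?_⟩
    have hxc : f x ≤ c := by
      refine le_of_forall_gt_imp_ge_of_dense fun b hb => ?_
      exact (hx ⟨b, hb⟩).2
    exact hxc.trans (iInf₂_le y hy)

end AuxMin

section AuxStruct

variable {T n : ℕ} {ℓ : LSp T n} {F : FSp T n} {φ : PhiSp T} {α : ASp T n} {m0 : Fin n → ℝ}

lemma opS_zero' (w : Wsp T n) (x : Fin n) : opS w 0 x = 0 := by
  unfold opS
  simp

lemma opS_succ (w : Wsp T n) (t : Fin T) (x : Fin n) : opS w t.succ x = ∑ y, w t y x := by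
  unfold opS
  rw [dif_neg (by simp [Fin.val_succ])]
  apply Finset.sum_congr rfl
  intro y _
  congr 1

lemma mbar0_zero (x : Fin n) : mbar0 (T := T) m0 0 x = m0 x := if_pos rfl

lemma mbar0_succ (t : Fin T) (x : Fin n) : mbar0 m0 t.succ x = 0 :=
  if_neg (Fin.succ_ne_zero t)

lemma kol_mass (hm0 : m0 ∈ simplex n) {π : Wsp T n} {m : Msp T n} (hπ : InDelta π)
    (hkol : IsKol m0 π m) : ∀ s, (∀ x, 0 ≤ m s x) ∧ ∑ x, m s x = 1 := by
  intro s
  induction s using Fin.induction with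
  | zero =>
    constructor
    · intro x; rw [hkol.1 x]; exact (hm0.1 x).1
    · rw [Finset.sum_congr rfl fun x _ => hkol.1 x]; exact hm0.2
  | succ t ih =>
    constructor
    · intro x
      rw [hkol.2 t x]
      exact Finset.sum_nonneg fun y _ => mul_nonneg (ih.1 y) ((hπ t y).1 x).1
    · rw [Finset.sum_congr rfl fun x (_ : x ∈ Finset.univ) => hkol.2 t x, Finset.sum_comm]
      have : ∀ y : Fin n, ∑ x, m t.castSucc y * π t y x = m t.castSucc y := by
        intro y
        rw [← Finset.mul_sum, (hπ t y).2, mul_one]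
      rw [Finset.sum_congr rfl fun y _ => this y]
      exact ih.2

lemma jtil_eq_jpot (hconv : ConvAssumption ℓ F φ) {m : Msp T n} (π : Wsp T n)
    (hm : ∀ t x, 0 ≤ m (Fin.castSucc t) x) :
    Jtil ℓ F φ α m (fun t x y => m (Fin.castSucc t) x * π t x y) = Jpot ℓ F φ α m π := by
  unfold Jtil Jpot
  congr 1
  congr 1
  · apply Finset.sum_congr rfl
    intro t _
    apply Finset.sum_congr rfl
    intro x _
    have hb : ((fun t x y => m (Fin.castSucc t) x * π t x y) t x)
        = fun y => m (Fin.castSucc t) x * π t x y := rfl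
    rw [hb]
    rcases (hm t x).lt_or_eq with hpos | hzero
    · have hfun : (fun y => m (Fin.castSucc t) x * π t x y) = (m (Fin.castSucc t) x) • π t x := by
        funext y; simp [smul_eq_mul]
      rw [hfun, persp_smul_pos hpos]
    · rw [← hzero]
      have hfun : (fun y => (0:ℝ) * π t x y) = (0 : Fin n → ℝ) := by
        funext y; simp
      rw [hfun, persp_zero_zero]
      simp

lemma feasP_to_feasPt (hm0 : m0 ∈ simplex n) (hconv : ConvAssumption ℓ F φ)
    {p : Msp T n × Wsp T n} (hp : FeasP m0 p) :
    FeasPt m0 (p.1, fun t x y => p.1 (Fin.castSucc t) x * p.2 t x y) ∧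
      Jtil ℓ F φ α p.1 (fun t x y => p.1 (Fin.castSucc t) x * p.2 t x y) =
        Jpot ℓ F φ α p.1 p.2 := by
  obtain ⟨hπ, hkol⟩ := hp
  constructor
  · intro s x
    induction s using Fin.cases with
    | zero =>
      simp only [opS_zero', mbar0_zero, hkol.1 x]
      ring
    | succ t =>
      have hb : opS (fun t x y => p.1 (Fin.castSucc t) x * p.2 t x y) t.succ x
          = ∑ y, p.1 (Fin.castSucc t) y * p.2 t y x := by
        rw [opS_succ]
      rw [hb, mbar0_succ, ← hkol.2 t x]
      ring
  · exact jtil_eq_jpot hconv p.2 fun t x => (kol_mass hm0 hπ hkol (Fin.castSucc t)).1 x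

lemma feasPt_struct (hconv : ConvAssumption ℓ F φ) (hm0 : m0 ∈ simplex n)
    {m : Msp T n} {w : Wsp T n} (hfeas : FeasPt m0 (m, w))
    (hfin : Jtil ℓ F φ α m w ≠ ⊤) :
    (∀ t x, 0 ≤ m (Fin.castSucc t) x ∧
        (∀ y, 0 ≤ w t x y ∧ w t x y ≤ m (Fin.castSucc t) x) ∧
        ∑ y, w t x y = m (Fin.castSucc t) x) ∧
    ∀ s, (∀ x, 0 ≤ m s x) ∧ ∑ x, m s x = 1 := by
  have hℓbot : ∀ (t : Fin T) (x : Fin n) ρ, ℓ t x ρ ≠ ⊥ := fun t x => (hconv.1 t x).1.2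
  have hφbot : ∀ (t : Fin T) r, φ t r ≠ ⊥ := fun t => (hconv.2.2 t).1.2
  have hFbot : ∀ (s : Fin (T+1)) ρ, F s ρ ≠ ⊥ := fun s => (hconv.2.1 s).1.2
  have hperspbot : ∀ (t : Fin T) (x : Fin n), persp (ℓ t x) (m (Fin.castSucc t) x) (w t x) ≠ ⊥ :=
    fun t x => persp_ne_bot (hℓbot t x) _ _
  have hAbot : (∑ t, ∑ x, persp (ℓ t x) (m (Fin.castSucc t) x) (w t x)) ≠ ⊥ :=
    ESum_ne_bot fun t _ => ESum_ne_bot fun x _ => hperspbot t x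
  have hBbot : (∑ t, φ t (opA α w t)) ≠ ⊥ := ESum_ne_bot fun t _ => hφbot t _
  have hCbot : (∑ s, F s (m s)) ≠ ⊥ := ESum_ne_bot fun s _ => hFbot s _
  have hfin' : (∑ t, ∑ x, persp (ℓ t x) (m (Fin.castSucc t) x) (w t x)) +
      (∑ t, φ t (opA α w t)) + (∑ s, F s (m s)) ≠ ⊤ := hfin
  have hABfin := EAdd_ne_top_left hCbot hfin'
  have hAfin := EAdd_ne_top_left hBbot hABfin
  have hterm : ∀ (t : Fin T) (x : Fin n),
      persp (ℓ t x) (m (Fin.castSucc t) x) (w t x) ≠ ⊤ := by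
    intro t x
    have h1 := ESum_mem_ne_top (fun t _ => ESum_ne_bot fun x _ => hperspbot t x) hAfin
      t (Finset.mem_univ t)
    exact ESum_mem_ne_top (fun x _ => hperspbot t x) h1 x (Finset.mem_univ x)
  have hpart1 : ∀ (t : Fin T) (x : Fin n), 0 ≤ m (Fin.castSucc t) x ∧
      (∀ y, 0 ≤ w t x y ∧ w t x y ≤ m (Fin.castSucc t) x) ∧
      ∑ y, w t x y = m (Fin.castSucc t) x := by
    intro t x
    rcases persp_struct (hconv.1 t x).2.2.2 (hterm t x) with ⟨h1, h2, h3⟩ | ⟨h1, h2⟩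
    · exact ⟨h1.le, fun y => h2 y, h3⟩
    · rw [h1, h2]
      refine ⟨le_refl 0, fun y => ⟨le_refl 0, le_refl 0⟩, ?_⟩
      simp
  refine ⟨hpart1, ?_⟩
  intro s
  induction s using Fin.induction with
  | zero =>
    have hx : ∀ x, m 0 x = m0 x := by
      intro x
      have := hfeas 0 x
      rw [opS_zero', mbar0_zero] at this
      linarith
    constructor
    · intro x; rw [hx x]; exact (hm0.1 x).1
    · rw [Finset.sum_congr rfl fun x _ => hx x]; exact hm0.2
  | succ t ih =>
    have hx : ∀ x, m t.succ x = ∑ y, w t y x := by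
      intro x
      have := hfeas t.succ x
      rw [opS_succ, mbar0_succ] at this
      linarith
    constructor
    · intro x
      rw [hx x]
      exact Finset.sum_nonneg fun y _ => ((hpart1 t y).2.1 x).1
    · rw [Finset.sum_congr rfl fun x (_ : x ∈ Finset.univ) => hx x, Finset.sum_comm]
      rw [Finset.sum_congr rfl fun y (_ : y ∈ Finset.univ) => (hpart1 t y).2.2]
      exact ih.2

lemma feasPt_to_feasP (hn : 1 ≤ n) (hconv : ConvAssumption ℓ F φ) (hm0 : m0 ∈ simplex n)
    {m : Msp T n} {w : Wsp T n} (hfeas : FeasPt m0 (m, w))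
    (hfin : Jtil ℓ F φ α m w ≠ ⊤) :
    ∃ π : Wsp T n, FeasP m0 (m, π) ∧ Jpot ℓ F φ α m π = Jtil ℓ F φ α m w := by
  obtain ⟨hpart1, hpart2⟩ := feasPt_struct hconv hm0 hfeas hfin
  set π : Wsp T n := fun t x => if 0 < m (Fin.castSucc t) x
    then (m (Fin.castSucc t) x)⁻¹ • w t x else fun _ => (n : ℝ)⁻¹ with hπdef
  have hw : ∀ t x y, w t x y = m (Fin.castSucc t) x * π t x y := by
    intro t x y
    rw [hπdef]
    by_cases h : 0 < m (Fin.castSucc t) x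
    · simp only [if_pos h, Pi.smul_apply, smul_eq_mul]
      field_simp
    · have h0 : m (Fin.castSucc t) x = 0 := le_antisymm (not_lt.1 h) (hpart1 t x).1
      have hw0 : w t x y = 0 :=
        le_antisymm (h0 ▸ ((hpart1 t x).2.1 y).2) ((hpart1 t x).2.1 y).1
      rw [hw0, h0, zero_mul]
  have hπΔ : InDelta π := by
    intro t x
    rw [hπdef]
    by_cases h : 0 < m (Fin.castSucc t) x
    · simp only [if_pos h]
      constructor
      · intro y
        simp only [Pi.smul_apply, smul_eq_mul, Set.mem_Icc]
        constructor
        · exact mul_nonneg (inv_nonneg.2 h.le) ((hpart1 t x).2.1 y).1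
        · rw [inv_mul_le_iff₀ h, mul_one]
          exact ((hpart1 t x).2.1 y).2
      · simp only [Pi.smul_apply, smul_eq_mul]
        rw [← Finset.mul_sum, (hpart1 t x).2.2, inv_mul_cancel₀ h.ne']
    · simp only [if_neg h]
      constructor
      · intro y
        have h1 : (0:ℝ) < n := by exact_mod_cast hn
        constructor
        · positivity
        · exact inv_le_one_of_one_le₀ (by exact_mod_cast hn)
      · have hb : ∑ y : Fin n, ((fun _ : Fin n => (n:ℝ)⁻¹) y) = ∑ _y : Fin n, (n:ℝ)⁻¹ := rfl
        rw [hb, Finset.sum_const, Finset.card_univ, Fintype.card_fin, nsmul_eq_mul]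
        have h1 : (n:ℝ) ≠ 0 := Nat.cast_ne_zero.2 (by omega)
        field_simp
  have hkol : IsKol m0 π m := by
    constructor
    · intro x
      have := hfeas 0 x
      rw [opS_zero', mbar0_zero] at this
      linarith
    · intro t x
      have h1 := hfeas t.succ x
      rw [opS_succ, mbar0_succ] at h1
      have h2 : m t.succ x = ∑ y, w t y x := by linarith
      rw [h2]
      exact Finset.sum_congr rfl fun y _ => hw t y x
  refine ⟨π, ⟨hπΔ, hkol⟩, ?_⟩
  have hweq : w = fun t x y => m (Fin.castSucc t) x * π t x y := by
    funext t x y; exact hw t x y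
  conv_rhs => rw [hweq]
  exact (jtil_eq_jpot hconv π fun t x => (hpart2 (Fin.castSucc t)).1 x).symm

end AuxStruct

section AuxTopo

variable {T n : ℕ} {ℓ : LSp T n} {F : FSp T n} {φ : PhiSp T} {α : ASp T n} {m0 : Fin n → ℝ}

lemma feasPt_isClosed : IsClosed {p : Msp T n × Wsp T n | FeasPt m0 p} := by
  have hset : {p : Msp T n × Wsp T n | FeasPt m0 p} =
      ⋂ (s : Fin (T+1)), ⋂ (x : Fin n),
        {p : Msp T n × Wsp T n | opS p.2 s x - p.1 s x + mbar0 m0 s x = 0} := by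
    ext p
    simp only [Set.mem_setOf_eq, Set.mem_iInter]
    rfl
  rw [hset]
  refine isClosed_iInter fun s => isClosed_iInter fun x => ?_
  refine isClosed_eq ?_ continuous_const
  have h1 : Continuous fun p : Msp T n × Wsp T n => opS p.2 s x := by
    by_cases h : (s : ℕ) = 0
    · have he : (fun p : Msp T n × Wsp T n => opS p.2 s x) = fun _ => 0 := by
        funext p; unfold opS; rw [dif_pos h]
      rw [he]; exact continuous_const
    · have he : (fun p : Msp T n × Wsp T n => opS p.2 s x) =
          fun p => ∑ y, p.2 ⟨(s:ℕ) - 1, by have := s.isLt; omega⟩ y x := by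
        funext p; unfold opS; rw [dif_neg h]
      rw [he]
      exact continuous_finset_sum _ fun y _ =>
        (continuous_apply x).comp ((continuous_apply y).comp
          ((continuous_apply _).comp continuous_snd))
  exact (h1.sub ((continuous_apply x).comp
    ((continuous_apply s).comp continuous_fst))).add continuous_const

lemma jtil_lsc (hconv : ConvAssumption ℓ F φ) :
    LowerSemicontinuous fun p : Msp T n × Wsp T n => Jtil ℓ F φ α p.1 p.2 := by
  have hA : LowerSemicontinuous fun p : Msp T n × Wsp T n =>
      ∑ t, ∑ x, persp (ℓ t x) (p.1 (Fin.castSucc t) x) (p.2 t x) := by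
    refine lsc_sum _ _ (fun t _ => ?_) (fun t _ p => ESum_ne_bot fun x _ =>
      persp_ne_bot (hconv.1 t x).1.2 _ _)
    refine lsc_sum _ _ (fun x _ => ?_) (fun x _ p => persp_ne_bot (hconv.1 t x).1.2 _ _)
    have hc : Continuous fun p : Msp T n × Wsp T n =>
        ((p.1 (Fin.castSucc t) x : ℝ), (p.2 t x : Fin n → ℝ)) :=
      (((continuous_apply x).comp ((continuous_apply (Fin.castSucc t)).comp
        continuous_fst))).prodMk ((continuous_apply x).comp
        ((continuous_apply t).comp continuous_snd))
    exact LowerSemicontinuous.comp (persp_lsc (hconv.1 t x).2.2.1 (hconv.1 t x).1.2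
      (hconv.1 t x).2.2.2) hc
  have hB : LowerSemicontinuous fun p : Msp T n × Wsp T n => ∑ t, φ t (opA α p.2 t) := by
    refine lsc_sum _ _ (fun t _ => ?_) (fun t _ p => (hconv.2.2 t).1.2 _)
    have hc : Continuous fun p : Msp T n × Wsp T n => opA α p.2 t := by
      unfold opA
      exact continuous_finset_sum _ fun x _ => continuous_finset_sum _ fun y _ =>
        (show Continuous fun p : Msp T n × Wsp T n => p.2 t x y from (continuous_apply y).comp ((continuous_apply x).comp
          ((continuous_apply t).comp continuous_snd))).mul continuous_const
    exact LowerSemicontinuous.comp (hconv.2.2 t).2.2 hc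
  have hC : LowerSemicontinuous fun p : Msp T n × Wsp T n => ∑ s, F s (p.1 s) := by
    refine lsc_sum _ _ (fun s _ => ?_) (fun s _ p => (hconv.2.1 s).1.2 _)
    exact LowerSemicontinuous.comp (hconv.2.1 s).2.2 ((continuous_apply s).comp continuous_fst)
  have hAbot : ∀ p : Msp T n × Wsp T n,
      (∑ t, ∑ x, persp (ℓ t x) (p.1 (Fin.castSucc t) x) (p.2 t x)) ≠ ⊥ :=
    fun p => ESum_ne_bot fun t _ => ESum_ne_bot fun x _ =>
      persp_ne_bot (hconv.1 t x).1.2 _ _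
  have hBbot : ∀ p : Msp T n × Wsp T n, (∑ t, φ t (opA α p.2 t)) ≠ ⊥ :=
    fun p => ESum_ne_bot fun t _ => (hconv.2.2 t).1.2 _
  have hCbot : ∀ p : Msp T n × Wsp T n, (∑ s, F s (p.1 s)) ≠ ⊥ :=
    fun p => ESum_ne_bot fun s _ => (hconv.2.1 s).1.2 _
  exact lsc_add_ne_bot (lsc_add_ne_bot hA hB hAbot hBbot) hC
    (fun p => by
      simp only [ne_eq, EReal.add_eq_bot_iff]
      push_neg
      exact ⟨hAbot p, hBbot p⟩) hCbot

lemma mem_ball_of_bounds {p : Msp T n × Wsp T n}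
    (hm : ∀ s x, 0 ≤ p.1 s x ∧ p.1 s x ≤ 1)
    (hw : ∀ t x y, 0 ≤ p.2 t x y ∧ p.2 t x y ≤ 1) :
    p ∈ Metric.closedBall (0 : Msp T n × Wsp T n) 1 := by
  rw [mem_closedBall_zero_iff, Prod.norm_def]
  apply max_le
  · rw [pi_norm_le_iff_of_nonneg zero_le_one]
    intro s
    rw [pi_norm_le_iff_of_nonneg zero_le_one]
    intro x
    rw [Real.norm_eq_abs, abs_le]
    exact ⟨by linarith [(hm s x).1], (hm s x).2⟩
  · rw [pi_norm_le_iff_of_nonneg zero_le_one]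
    intro t
    rw [pi_norm_le_iff_of_nonneg zero_le_one]
    intro x
    rw [pi_norm_le_iff_of_nonneg zero_le_one]
    intro y
    rw [Real.norm_eq_abs, abs_le]
    exact ⟨by linarith [(hw t x y).1], (hw t x y).2⟩

lemma feasP_mem_ball (hm0 : m0 ∈ simplex n) {p : Msp T n × Wsp T n} (hp : FeasP m0 p) :
    p ∈ Metric.closedBall (0 : Msp T n × Wsp T n) 1 := by
  have hmass := kol_mass hm0 hp.1 hp.2
  refine mem_ball_of_bounds (fun s x => ?_) (fun t x y => ?_)
  · refine ⟨(hmass s).1 x, ?_⟩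
    have := Finset.single_le_sum (fun y (_ : y ∈ Finset.univ) => (hmass s).1 y)
      (Finset.mem_univ x)
    rw [(hmass s).2] at this
    exact this
  · exact ⟨((hp.1 t x).1 y).1, ((hp.1 t x).1 y).2⟩

lemma feasPt_mem_ball (hconv : ConvAssumption ℓ F φ) (hm0 : m0 ∈ simplex n)
    {p : Msp T n × Wsp T n} (hp : FeasPt m0 p) (hfin : Jtil ℓ F φ α p.1 p.2 ≠ ⊤) :
    p ∈ Metric.closedBall (0 : Msp T n × Wsp T n) 1 := by
  obtain ⟨hpart1, hpart2⟩ := feasPt_struct (α := α) hconv hm0 (m := p.1) (w := p.2) hp hfin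
  have hm1 : ∀ s x, 0 ≤ p.1 s x ∧ p.1 s x ≤ 1 := by
    intro s x
    refine ⟨(hpart2 s).1 x, ?_⟩
    have := Finset.single_le_sum (fun y (_ : y ∈ Finset.univ) => (hpart2 s).1 y)
      (Finset.mem_univ x)
    rw [(hpart2 s).2] at this
    exact this
  refine mem_ball_of_bounds hm1 (fun t x y => ?_)
  exact ⟨((hpart1 t x).2.1 y).1, ((hpart1 t x).2.1 y).2.trans (hm1 _ x).2⟩

end AuxTopo

set_option maxHeartbeats 2000000

/-- Lemma 3: `val(P) = val(P̃)`; if (P) is feasible then both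
(P) and (P̃) have a nonempty bounded set of solutions. -/
theorem valP_eq_valPt_and_solutions {T n : ℕ} (hT : 1 ≤ T) (hn : 1 ≤ n)
    (ℓ : LSp T n) (F : FSp T n) (φ : PhiSp T) (α : ASp T n)
    (m0 : Fin n → ℝ) (hm0 : m0 ∈ simplex n)
    (hconv : ConvAssumption ℓ F φ) :
    valP ℓ F φ α m0 = valPt ℓ F φ α m0 ∧
    ((∃ p : Msp T n × Wsp T n, FeasP m0 p ∧ Jpot ℓ F φ α p.1 p.2 ≠ ⊤) →
      ({p : Msp T n × Wsp T n | IsSolP ℓ F φ α m0 p}.Nonempty ∧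
       IsBounded {p : Msp T n × Wsp T n | IsSolP ℓ F φ α m0 p} ∧
       {p : Msp T n × Wsp T n | IsSolPt ℓ F φ α m0 p}.Nonempty ∧
       IsBounded {p : Msp T n × Wsp T n | IsSolPt ℓ F φ α m0 p})) := by
  classical
  have hval : valP ℓ F φ α m0 = valPt ℓ F φ α m0 := by
    apply le_antisymm
    · refine le_iInf₂ fun p hp => ?_
      by_cases hfin : Jtil ℓ F φ α p.1 p.2 = ⊤
      · rw [hfin]; exact le_top
      · obtain ⟨π, hfeasP, heq⟩ :=
          feasPt_to_feasP (α := α) hn hconv hm0 (m := p.1) (w := p.2) hp hfin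
        calc valP ℓ F φ α m0 ≤ Jpot ℓ F φ α p.1 π := iInf₂_le (p.1, π) hfeasP
          _ = Jtil ℓ F φ α p.1 p.2 := heq
    · refine le_iInf₂ fun p hp => ?_
      obtain ⟨hfeas, heq⟩ := feasP_to_feasPt (α := α) hm0 hconv hp
      calc valPt ℓ F φ α m0
          ≤ Jtil ℓ F φ α p.1 (fun t x y => p.1 (Fin.castSucc t) x * p.2 t x y) :=
            iInf₂_le _ hfeas
        _ = Jpot ℓ F φ α p.1 p.2 := heq
  refine ⟨hval, ?_⟩
  rintro ⟨p0, hp0, hp0fin⟩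
  obtain ⟨hq0feas, hq0eq⟩ := feasP_to_feasPt (α := α) hm0 hconv hp0
  have hq0fin : Jtil ℓ F φ α p0.1
      (fun t x y => p0.1 (Fin.castSucc t) x * p0.2 t x y) ≠ ⊤ := by
    rw [hq0eq]; exact hp0fin
  set c0 : EReal := Jtil ℓ F φ α p0.1
    (fun t x y => p0.1 (Fin.castSucc t) x * p0.2 t x y) with hc0
  set K := {p : Msp T n × Wsp T n | FeasPt m0 p} ∩
    {p : Msp T n × Wsp T n | Jtil ℓ F φ α p.1 p.2 ≤ c0} with hKdef
  have hsubl : IsClosed {p : Msp T n × Wsp T n | Jtil ℓ F φ α p.1 p.2 ≤ c0} := by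
    have hset : {p : Msp T n × Wsp T n | Jtil ℓ F φ α p.1 p.2 ≤ c0} =
        ((fun p : Msp T n × Wsp T n => Jtil ℓ F φ α p.1 p.2) ⁻¹' Set.Ioi c0)ᶜ := by
      ext p; simp [not_lt]
    rw [hset]
    exact ((jtil_lsc hconv).isOpen_preimage c0).isClosed_compl
  have hKclosed : IsClosed K := feasPt_isClosed.inter hsubl
  have hKsub : K ⊆ Metric.closedBall (0 : Msp T n × Wsp T n) 1 := by
    intro p hp
    have hfin : Jtil ℓ F φ α p.1 p.2 ≠ ⊤ := ne_top_of_le_ne_top hq0fin hp.2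
    exact feasPt_mem_ball hconv hm0 hp.1 hfin
  have hKcompact : IsCompact K :=
    (isCompact_closedBall (0 : Msp T n × Wsp T n) 1).of_isClosed_subset hKclosed hKsub
  have hq0K : (p0.1, fun t x y => p0.1 (Fin.castSucc t) x * p0.2 t x y) ∈ K := by
    refine ⟨hq0feas, ?_⟩
    show Jtil ℓ F φ α p0.1 (fun t x y => p0.1 (Fin.castSucc t) x * p0.2 t x y) ≤ c0
    exact le_of_eq hc0.symm
  obtain ⟨ps, hpsK, hpsmin⟩ := exists_min_lsc hKcompact hKclosed ⟨_, hq0K⟩ (jtil_lsc hconv)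
  have hsolPt : IsSolPt ℓ F φ α m0 ps := by
    refine ⟨hpsK.1, fun q hq => ?_⟩
    rcases le_total (Jtil ℓ F φ α q.1 q.2) c0 with h | h
    · exact hpsmin q ⟨hq, h⟩
    · exact (hpsmin _ hq0K).trans h
  have hpsfin : Jtil ℓ F φ α ps.1 ps.2 ≠ ⊤ := ne_top_of_le_ne_top hq0fin hpsK.2
  obtain ⟨πs, hfeasPs, heqs⟩ :=
    feasPt_to_feasP (α := α) hn hconv hm0 (m := ps.1) (w := ps.2) hpsK.1 hpsfin
  have hsolP : IsSolP ℓ F φ α m0 (ps.1, πs) := by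
    refine ⟨hfeasPs, fun q hqfeas => ?_⟩
    obtain ⟨hqt, hqe⟩ := feasP_to_feasPt (α := α) hm0 hconv hqfeas
    calc Jpot ℓ F φ α ps.1 πs = Jtil ℓ F φ α ps.1 ps.2 := heqs
      _ ≤ Jtil ℓ F φ α q.1 (fun t x y => q.1 (Fin.castSucc t) x * q.2 t x y) :=
          hsolPt.2 (q.1, fun t x y => q.1 (Fin.castSucc t) x * q.2 t x y) hqt
      _ = Jpot ℓ F φ α q.1 q.2 := hqe
  refine ⟨⟨(ps.1, πs), hsolP⟩, ?_, ⟨ps, hsolPt⟩, ?_⟩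
  · exact (Metric.isBounded_closedBall (x := (0 : Msp T n × Wsp T n)) (r := 1)).subset fun q hq => feasP_mem_ball hm0 hq.1
  · refine (Metric.isBounded_closedBall (x := (0 : Msp T n × Wsp T n)) (r := 1)).subset fun q hq => ?_
    exact hKsub ⟨hq.1, hq.2 (p0.1, fun t x y => p0.1 (Fin.castSucc t) x * p0.2 t x y) hq0feas⟩

end
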